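/- Let P^π be a row-stochastic matrix with stationary distribution ν^π satisfying ‖(I − P^π + 1(ν^π)ᵀ)^{-1}‖_∞ ≤ 2 t_mix, let r^π ∈ [0,1]^S, and let λ ∈ Δ^S satisfy ‖(λ − ν^π)ᵀ(I − P^π)‖_1 ≤ ε/(2 t_mix). Then (ν^π − λ)ᵀ r^π ≤ ε. -/

import Mathlib

open Finset

/-- Operator ∞-norm of a matrix: maximum absolute row sum. -/
noncomputable def matNormInf {S : Type*} [Fintype S] [Nonempty S] (A : Matrix S S ℝ) : ℝ :=
  Finset.univ.sup' Finset.univ_nonempty (fun i => ∑ j, |A i j|)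

/-- If `‖(λ − ν)ᵀ(I − Pπ)‖₁ ≤ ε/(2 tmix)` and the fundamental matrix of the mixing
chain has ∞-norm at most `2 tmix`, then `(ν − λ)ᵀ rπ ≤ ε` for rewards in `[0,1]`. -/
theorem stmt12 {S : Type*} [Fintype S] [DecidableEq S] [Nonempty S]
    (Ppi : Matrix S S ℝ) (hPnn : ∀ i j, 0 ≤ Ppi i j) (hProw : ∀ i, ∑ j, Ppi i j = 1)
    (ν : S → ℝ) (hνnn : ∀ i, 0 ≤ ν i) (hνsum : ∑ i, ν i = 1)
    (hstat : ∀ j, ∑ i, ν i * Ppi i j = ν j)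
    (tmix : ℕ) (htmix : 0 < tmix)
    (B : Matrix S S ℝ)
    (hB1 : (1 - Ppi + Matrix.of (fun _ j => ν j)) * B = 1)
    (hB2 : B * (1 - Ppi + Matrix.of (fun _ j => ν j)) = 1)
    (hBnorm : matNormInf B ≤ 2 * tmix)
    (r : S → ℝ) (hr : ∀ i, 0 ≤ r i ∧ r i ≤ 1)
    (lam : S → ℝ) (hlamnn : ∀ i, 0 ≤ lam i) (hlamsum : ∑ i, lam i = 1)
    (ε : ℝ)
    (hlam : ∑ j, |∑ i, (lam i - ν i) * ((if i = j then 1 else 0) - Ppi i j)|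
      ≤ ε / (2 * tmix)) :
    ∑ i, (ν i - lam i) * r i ≤ ε := by
  set A : Matrix S S ℝ := 1 - Ppi + Matrix.of (fun _ j => ν j) with hA
  set d : S → ℝ := fun i => ν i - lam i with hdd
  have hd0 : ∑ i, d i = 0 := by simp [hdd, Finset.sum_sub_distrib, hνsum, hlamsum]
  set c : ℝ := ∑ k, ν k * r k with hc
  have hc0 : 0 ≤ c := Finset.sum_nonneg fun k _ => mul_nonneg (hνnn k) (hr k).1
  have hc1 : c ≤ 1 := by
    calc c ≤ ∑ k, ν k := Finset.sum_le_sum fun k _ =>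
            mul_le_of_le_one_right (hνnn k) (hr k).2
    _ = 1 := hνsum
  set x : S → ℝ := fun i => r i - c with hx
  have hxb : ∀ i, |x i| ≤ 1 := by
    intro i
    rw [abs_le]
    constructor <;> simp only [hx] <;> nlinarith [(hr i).1, (hr i).2]
  set y : S → ℝ := B.mulVec x with hy
  have hyb : ∀ j, |y j| ≤ 2 * tmix := by
    intro j
    have h1 : |y j| ≤ ∑ k, |B j k| * |x k| := by
      rw [hy]
      calc |∑ k, B j k * x k| ≤ ∑ k, |B j k * x k| := Finset.abs_sum_le_sum_abs _ _
      _ = ∑ k, |B j k| * |x k| := by simp [abs_mul]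
    have h2 : ∑ k, |B j k| * |x k| ≤ ∑ k, |B j k| := by
      apply Finset.sum_le_sum
      intro k _
      exact mul_le_of_le_one_right (abs_nonneg _) (hxb k)
    have h3 : ∑ k, |B j k| ≤ matNormInf B :=
      Finset.le_sup' (fun i => ∑ k, |B i k|) (Finset.mem_univ j)
    linarith
  have hAy : A.mulVec y = x := by
    rw [hy, Matrix.mulVec_mulVec, hB1, Matrix.one_mulVec]
  -- rewrite LHS
  have key : ∑ i, (ν i - lam i) * r i = ∑ j, (∑ i, d i * A i j) * y j := by
    have e1 : ∑ i, (ν i - lam i) * r i = ∑ i, d i * x i := by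
      simp only [hx, hdd, mul_sub, Finset.sum_sub_distrib, ← Finset.sum_mul, hd0]
      rw [hνsum, hlamsum]; ring
    rw [e1, ← hAy]
    simp only [Matrix.mulVec, dotProduct]
    simp only [Finset.mul_sum, Finset.sum_mul]
    rw [Finset.sum_comm]
    apply Finset.sum_congr rfl
    intro j _
    apply Finset.sum_congr rfl
    intro i _
    ring
  have hcol : ∀ j, ∑ i, d i * A i j
      = -(∑ i, (lam i - ν i) * ((if i = j then 1 else 0) - Ppi i j)) := by
    intro j
    have : ∑ i, d i * A i j
        = (∑ i, d i * ((if i = j then 1 else 0) - Ppi i j)) + (∑ i, d i) * ν j := by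
      rw [Finset.sum_mul, ← Finset.sum_add_distrib]
      apply Finset.sum_congr rfl
      intro i _
      simp only [hA, Matrix.add_apply, Matrix.sub_apply, Matrix.one_apply, Matrix.of_apply]
      ring
    rw [this, hd0, zero_mul, add_zero, ← Finset.sum_neg_distrib]
    apply Finset.sum_congr rfl
    intro i _
    simp only [hdd]
    ring
  calc ∑ i, (ν i - lam i) * r i = ∑ j, (∑ i, d i * A i j) * y j := key
  _ ≤ ∑ j, |∑ i, (lam i - ν i) * ((if i = j then 1 else 0) - Ppi i j)| * (2 * tmix) := by
      apply Finset.sum_le_sum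
      intro j _
      rw [hcol j]
      calc -(∑ i, (lam i - ν i) * ((if i = j then 1 else 0) - Ppi i j)) * y j
          ≤ |(-(∑ i, (lam i - ν i) * ((if i = j then 1 else 0) - Ppi i j))) * y j| :=
            le_abs_self _
        _ = |∑ i, (lam i - ν i) * ((if i = j then 1 else 0) - Ppi i j)| * |y j| := by
            rw [abs_mul, abs_neg]
        _ ≤ _ := mul_le_mul_of_nonneg_left (hyb j) (abs_nonneg _)
  _ = (∑ j, |∑ i, (lam i - ν i) * ((if i = j then 1 else 0) - Ppi i j)|) * (2 * tmix) := by
      rw [Finset.sum_mul]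
  _ ≤ (ε / (2 * tmix)) * (2 * tmix) := by
      apply mul_le_mul_of_nonneg_right hlam
      positivity
  _ = ε := by
      field_simp
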